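/- Let A ∈ GL(2,ℝ) be a matrix whose (complex) eigenvalues are non-real. Then for every ε > 0 there exist an integer N ≥ 1 and matrices B_0, …, B_{N−1} ∈ GL(2,ℝ) with ‖B_j − A‖ < ε for every j, such that the product B_{N−1}···B_0 equals c·Id for some real number c > 0; that is, a large power of a matrix with complex eigenvalues can be turned into a positive homothety by an arbitrarily small perturbation of each factor. -/

import Mathlib

noncomputable section

abbrev M2 := Matrix (Fin 2) (Fin 2) ℝ
abbrev E2 := EuclideanSpace ℝ (Fin 2)

/-- The continuous linear map on Euclidean `ℝ²` induced by a `2 × 2` matrix. -/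
def mCLM (A : M2) : E2 →L[ℝ] E2 := Matrix.toEuclideanCLM (𝕜 := ℝ) A

/-- Operator norm (w.r.t. the Euclidean norm) of a `2 × 2` matrix. -/
def mnorm (A : M2) : ℝ := ‖mCLM A‖

/-- Action of a `2 × 2` matrix on a vector of Euclidean `ℝ²`. -/
def mact (A : M2) (x : E2) : E2 := mCLM A x

end

/-- The product `B (N-1) * ⋯ * B 0` of a finite tuple of matrices. -/
def finProdRev {N : ℕ} (B : Fin N → M2) : M2 := ((List.ofFn B).reverse).prod

-- aux lemmas
lemma mnorm_nonneg (A : M2) : 0 ≤ mnorm A := norm_nonneg _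

lemma mnorm_add_le (X Y : M2) : mnorm (X + Y) ≤ mnorm X + mnorm Y := by
  unfold mnorm mCLM; rw [map_add]; exact norm_add_le _ _

lemma mnorm_smul (a : ℝ) (X : M2) : mnorm (a • X) = |a| * mnorm X := by
  unfold mnorm mCLM
  rw [map_smul]
  exact norm_smul a (Matrix.toEuclideanCLM (𝕜 := ℝ) X : E2 →L[ℝ] E2)

lemma mnorm_one : mnorm (1 : M2) = 1 := by
  unfold mnorm mCLM
  rw [map_one]
  exact norm_one

lemma ch (A : M2) : A * A - A.trace • A + A.det • 1 = 0 := by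
  ext i j
  fin_cases i <;> fin_cases j <;>
    simp [Matrix.mul_apply, Fin.sum_univ_two, Matrix.trace_fin_two,
      Matrix.det_fin_two, Matrix.one_apply] <;> ring


/-- A large power of a matrix with non-real eigenvalues can be turned into a
positive homothety by an arbitrarily small perturbation of each factor. -/
theorem stmt17 (A : M2) (hA : IsUnit A) (hcx : A.trace ^ 2 - 4 * A.det < 0)
    (ε : ℝ) (hε : 0 < ε) :
    ∃ N : ℕ, 1 ≤ N ∧ ∃ B : Fin N → M2,
      (∀ j, IsUnit (B j) ∧ mnorm (B j - A) < ε) ∧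
      ∃ c : ℝ, 0 < c ∧ finProdRev B = c • (1 : M2) := by
  set t := A.trace with ht
  set d := A.det with hd
  have hs0 : 0 < d - t ^ 2 / 4 := by nlinarith
  set s : ℝ := Real.sqrt (d - t ^ 2 / 4) with hsdef
  have hs : 0 < s := Real.sqrt_pos.2 hs0
  have hs2 : s ^ 2 = d - t ^ 2 / 4 := Real.sq_sqrt hs0.le
  set J : M2 := s⁻¹ • (A - (t / 2) • 1) with hJdef
  have hJJ : J * J = -1 := by
    have h1 : (A - (t / 2) • 1) * (A - (t / 2) • 1) = (t ^ 2 / 4 - d) • 1 := by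
      rw [ht, hd]
      ext i j
      fin_cases i <;> fin_cases j <;>
        simp [Matrix.mul_apply, Fin.sum_univ_two, Matrix.trace_fin_two,
          Matrix.det_fin_two, Matrix.one_apply, Matrix.sub_apply, Matrix.smul_apply] <;> ring
    rw [hJdef, smul_mul_smul_comm, h1, smul_smul]
    have : s⁻¹ * s⁻¹ * (t ^ 2 / 4 - d) = -1 := by
      field_simp
      nlinarith
    rw [this, neg_one_smul, ← neg_one_smul ℝ (1 : M2)]
  -- the embedding of ℂ
  set φ : ℂ → M2 := fun z => z.re • (1 : M2) + z.im • J with hφ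
  have φ_mul : ∀ z w : ℂ, φ (z * w) = φ z * φ w := by
    intro z w
    simp only [hφ, Complex.mul_re, Complex.mul_im]
    rw [add_mul, mul_add, mul_add]
    simp only [smul_mul_smul_comm, one_mul, mul_one, hJJ]
    rw [sub_smul, add_smul]
    module
  have φ_one : φ 1 = 1 := by simp [hφ]
  have φ_pow : ∀ (n : ℕ) (z : ℂ), φ (z ^ n) = φ z ^ n := by
    intro n z
    induction n with
    | zero => simpa using φ_one
    | succ n ih => rw [pow_succ, pow_succ, φ_mul, ih]
  have φ_sub : ∀ z w : ℂ, φ (z - w) = φ z - φ w := by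
    intro z w
    simp only [hφ, Complex.sub_re, Complex.sub_im, sub_smul]
    module
  -- λ
  set lam : ℂ := Complex.mk (t / 2) s with hlam
  have hlamre : lam.re = t / 2 := rfl
  have hlamim : lam.im = s := rfl
  have φlam : φ lam = A := by
    simp only [hφ, hlamre, hlamim, hJdef, smul_smul]
    rw [mul_inv_cancel₀ hs.ne', one_smul]
    module
  have hlamne : lam ≠ 0 := fun h => by
    have : lam.im = 0 := by rw [h]; rfl
    exact hs.ne' (by rw [← hlamim, this])
  set r : ℝ := ‖lam‖ with hr
  have hrpos : 0 < r := by
    rw [hr]; exact norm_pos_iff.mpr hlamne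
  set θ : ℝ := lam.arg with hθ
  set K : ℝ := mnorm J with hK
  have hK0 : 0 ≤ K := mnorm_nonneg J
  -- norm bound for φ
  have φ_norm : ∀ z : ℂ, mnorm (φ z) ≤ ‖z‖ * (1 + K) := by
    intro z
    calc mnorm (φ z) ≤ mnorm (z.re • (1 : M2)) + mnorm (z.im • J) := mnorm_add_le _ _
      _ = |z.re| * 1 + |z.im| * K := by rw [mnorm_smul, mnorm_smul, mnorm_one]
      _ ≤ ‖z‖ * 1 + ‖z‖ * K := by
          gcongr
          · exact Complex.abs_re_le_norm z
          · exact Complex.abs_im_le_norm z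
      _ = ‖z‖ * (1 + K) := by ring
  -- choose N
  obtain ⟨N, hN⟩ := exists_nat_gt (2 * Real.pi * r * (1 + K) / ε + 4)
  have hπ : (0:ℝ) < Real.pi := Real.pi_pos
  have hεd : 0 ≤ 2 * Real.pi * r * (1 + K) / ε := by positivity
  have hN4 : (4:ℝ) < N := by linarith
  have hNpos : (0:ℝ) < N := by linarith
  have hN1 : 1 ≤ N := by exact_mod_cast Nat.one_le_cast.mpr (by exact_mod_cast (by linarith : (1:ℝ) ≤ N))
  refine ⟨N, hN1, ?_⟩
  set k : ℤ := round ((N : ℝ) * θ / (2 * Real.pi)) with hk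
  set α : ℝ := 2 * Real.pi * k / N with hα
  have hαθ : |α - θ| ≤ Real.pi / N := by
    have h1 : |(N : ℝ) * θ / (2 * Real.pi) - k| ≤ 1 / 2 := abs_sub_round _
    have h2 : α - θ = -(2 * Real.pi / N) * ((N : ℝ) * θ / (2 * Real.pi) - k) := by
      field_simp [hα]
      rw [hα, sub_mul, div_mul_cancel₀ _ hNpos.ne']; ring
    rw [h2, abs_mul, abs_neg, abs_of_pos (by positivity)]
    calc 2 * Real.pi / N * |(N : ℝ) * θ / (2 * Real.pi) - k| ≤ 2 * Real.pi / N * (1/2) := by gcongr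
      _ = Real.pi / N := by ring
  set μ : ℂ := (r : ℂ) * Complex.exp (α * Complex.I) with hμ
  have hμne : μ ≠ 0 := by
    apply mul_ne_zero
    · exact_mod_cast hrpos.ne'
    · exact Complex.exp_ne_zero _
  have hμN : μ ^ N = ((r ^ N : ℝ) : ℂ) := by
    rw [hμ, mul_pow, ← Complex.exp_nat_mul]
    have h : (N : ℝ) * α = (k : ℝ) * (2 * Real.pi) := by
      rw [hα]; field_simp
    have hNα : (N : ℂ) * (α * Complex.I) = (k : ℂ) * (2 * (Real.pi : ℂ) * Complex.I) := by
      calc (N : ℂ) * (α * Complex.I) = (((N : ℝ) * α : ℝ) : ℂ) * Complex.I := by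
            push_cast; ring
        _ = (((k : ℝ) * (2 * Real.pi) : ℝ) : ℂ) * Complex.I := by rw [h]
        _ = (k : ℂ) * (2 * (Real.pi : ℂ) * Complex.I) := by push_cast; ring
    rw [hNα, Complex.exp_int_mul_two_pi_mul_I]
    push_cast
    ring
  -- distance bound
  have hlameq : lam = (r : ℂ) * Complex.exp (θ * Complex.I) := by
    rw [hr, hθ]; exact (Complex.norm_mul_exp_arg_mul_I lam).symm
  have hαθ1 : |α - θ| ≤ 1 := by
    refine hαθ.trans ?_
    rw [div_le_one hNpos]
    linarith [Real.pi_le_four]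
  have hdist : ‖μ - lam‖ ≤ 2 * r * (Real.pi / N) := by
    have hsplit : μ - lam = (r : ℂ) * Complex.exp (θ * Complex.I) *
        (Complex.exp (((α - θ : ℝ) : ℂ) * Complex.I) - 1) := by
      rw [hμ, hlameq, mul_sub, mul_one, mul_assoc, ← Complex.exp_add]
      push_cast
      ring_nf
    rw [hsplit]
    rw [norm_mul, norm_mul]
    have habsI : ‖((α - θ : ℝ) : ℂ) * Complex.I‖ = |α - θ| := by
      rw [norm_mul, Complex.norm_I, mul_one, Complex.norm_real, Real.norm_eq_abs]
    have h3 : ‖Complex.exp (((α - θ : ℝ) : ℂ) * Complex.I) - 1‖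
        ≤ 2 * |α - θ| := by
      have := Complex.norm_exp_sub_one_le (x := ((α - θ : ℝ) : ℂ) * Complex.I)
        (by rw [habsI]; exact hαθ1)
      rwa [habsI] at this
    have h4 : ‖(r : ℂ)‖ = r := by
      rw [Complex.norm_real, Real.norm_eq_abs, abs_of_pos hrpos]
    rw [h4, Complex.norm_exp_ofReal_mul_I, mul_one]
    calc r * ‖Complex.exp (((α - θ : ℝ) : ℂ) * Complex.I) - 1‖
        ≤ r * (2 * |α - θ|) := by gcongr
      _ ≤ r * (2 * (Real.pi / N)) := by gcongr
      _ = 2 * r * (Real.pi / N) := by ring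
  set B : M2 := φ μ with hB
  refine ⟨fun _ => B, ?_, r ^ N, pow_pos hrpos N, ?_⟩
  · intro j
    constructor
    · refine ⟨⟨B, φ μ⁻¹, ?_, ?_⟩, rfl⟩
      · rw [hB, ← φ_mul μ μ⁻¹, mul_inv_cancel₀ hμne, φ_one]
      · rw [hB, ← φ_mul μ⁻¹ μ, inv_mul_cancel₀ hμne, φ_one]
    · have h1 : mnorm (B - A) ≤ ‖μ - lam‖ * (1 + K) := by
        rw [hB, ← φlam, ← φ_sub]
        exact φ_norm _
      have h2 : ‖μ - lam‖ * (1 + K) ≤ 2 * r * (Real.pi / N) * (1 + K) :=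
        mul_le_mul_of_nonneg_right hdist (by linarith)
      have h3 : 2 * r * (Real.pi / N) * (1 + K) < ε := by
        have hd1 : 2 * Real.pi * r * (1 + K) / ε < N := by linarith
        have hlt : 2 * Real.pi * r * (1 + K) < ε * N := by
          calc 2 * Real.pi * r * (1 + K) = 2 * Real.pi * r * (1 + K) / ε * ε := by
                rw [div_mul_cancel₀ _ hε.ne']
            _ < N * ε := mul_lt_mul_of_pos_right hd1 hε
            _ = ε * N := mul_comm _ _
        have heq : 2 * r * (Real.pi / N) * (1 + K) = 2 * Real.pi * r * (1 + K) / N := by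
          ring
        rw [heq, div_lt_iff₀ hNpos]
        linarith
      linarith
  · unfold finProdRev
    rw [List.ofFn_const, List.reverse_replicate, List.prod_replicate]
    rw [hB, ← φ_pow, hμN]
    simp only [hφ, Complex.ofReal_re, Complex.ofReal_im, zero_smul, add_zero]
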